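/- Let X be a finite nonempty set with a metric d, and let K_d := { δ : X → ℝ | δ_x ≥ 0 for all x, Σ_x δ_x = 1, and δ_x ≤ exp(d x x') · δ_{x'} for all x, x' ∈ X }. Then for every finite nonempty Y and every d-private channel M : X → Y → ℝ there exist a finite nonempty set Z, a d-private channel V : X → Z → ℝ such that every column of V has positive sum and every normalized column of V (the column divided by its sum) is an extreme point of the convex set K_d, and a channel P : Z → Y → ℝ such that M x y = Σ_{z∈Z} V x z · P z y for all x, y. (Every d-private mechanism is a refinement of a vertex mechanism of the privacy type.) -/

import Mathlib

open Finset

/-- A channel from `X` to `Y`: nonnegative entries and each row sums to 1. -/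
def IsChannel {X Y : Type} [Fintype Y] (M : X → Y → ℝ) : Prop :=
  (∀ x y, 0 ≤ M x y) ∧ ∀ x, ∑ y, M x y = 1

/-- The `d`-privacy constraints on a channel. -/
def IsPrivate {X Y : Type} (d : X → X → ℝ) (M : X → Y → ℝ) : Prop :=
  ∀ x x' y, M x y ≤ Real.exp (d x x') * M x' y

/-- `d` is a metric on `X`. -/
def IsMetric {X : Type} (d : X → X → ℝ) : Prop :=
  (∀ x, d x x = 0) ∧ (∀ x x' : X, x ≠ x' → 0 < d x x') ∧
    (∀ x x', d x x' = d x' x) ∧ ∀ x y z, d x z ≤ d x y + d y z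

/-- The convex set of `d`-private distributions on `X`. -/
def Kd {X : Type} [Fintype X] (d : X → X → ℝ) : Set (X → ℝ) :=
  {δ | (∀ x, 0 ≤ δ x) ∧ (∑ x, δ x = 1) ∧
        ∀ x x', δ x ≤ Real.exp (d x x') * δ x'}

namespace VertexAux

attribute [local instance] Classical.propDecidable

variable {X : Type} [Fintype X]

/-- The linear constraint functions defining `Kd` (besides the sum-to-one equality). -/
noncomputable def g (d : X → X → ℝ) : (X ⊕ X × X) → (X → ℝ) → ℝ
  | Sum.inl x => fun u => -u x
  | Sum.inr p => fun u => u p.1 - Real.exp (d p.1 p.2) * u p.2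

lemma g_line (d : X → X → ℝ) (c : X ⊕ X × X) (u v : X → ℝ) (t : ℝ) :
    g d c (u + t • v) = g d c u + t * g d c v := by
  cases c <;> simp [g, Pi.add_apply, Pi.smul_apply, smul_eq_mul] <;> ring

lemma g_combo (d : X → X → ℝ) (c : X ⊕ X × X) (u v : X → ℝ) (s t : ℝ) :
    g d c (s • u + t • v) = s * g d c u + t * g d c v := by
  cases c <;> simp [g, Pi.add_apply, Pi.smul_apply, smul_eq_mul] <;> ring

lemma g_sub (d : X → X → ℝ) (c : X ⊕ X × X) (u v : X → ℝ) :
    g d c (u - v) = g d c u - g d c v := by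
  cases c <;> simp [g, Pi.sub_apply] <;> ring

lemma g_neg (d : X → X → ℝ) (c : X ⊕ X × X) (v : X → ℝ) :
    g d c (-v) = - g d c v := by
  cases c <;> simp [g, Pi.neg_apply] <;> ring

lemma mem_Kd_iff {d : X → X → ℝ} {δ : X → ℝ} :
    δ ∈ Kd d ↔ ((∑ x, δ x = 1) ∧ ∀ c, g d c δ ≤ 0) := by
  constructor
  · rintro ⟨h1, h2, h3⟩
    refine ⟨h2, ?_⟩
    rintro (x | ⟨x, x'⟩)
    · simpa [g] using h1 x
    · simpa [g] using sub_nonpos.mpr (h3 x x')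
  · rintro ⟨hsum, hc⟩
    refine ⟨fun x => by simpa [g] using hc (Sum.inl x), hsum, fun x x' => ?_⟩
    have := hc (Sum.inr (x, x'))
    simp only [g] at this
    linarith

/-- Moving from `δ` along a direction `v` that keeps all tight constraints tight,
we can reach a point of `Kd` with strictly more tight constraints. -/
lemma push {d : X → X → ℝ} {δ v : X → ℝ} (hδ : δ ∈ Kd d)
    (hsum : ∑ x, v x = 0) (htight : ∀ c, g d c δ = 0 → g d c v = 0)
    (hneg : ∃ x, v x < 0) :
    ∃ b : ℝ, 0 ≤ b ∧ δ + b • v ∈ Kd d ∧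
      (Finset.univ.filter fun c => g d c (δ + b • v) ≠ 0) ⊂
        (Finset.univ.filter fun c => g d c δ ≠ 0) := by
  obtain ⟨hKsum, hKc⟩ := mem_Kd_iff.mp hδ
  set T : Set ℝ := {s : ℝ | ∀ c, g d c δ + s * g d c v ≤ 0} with hT
  have hmem : ∀ s : ℝ, δ + s • v ∈ Kd d ↔ s ∈ T := by
    intro s
    rw [mem_Kd_iff]
    constructor
    · rintro ⟨-, h⟩ c; rw [← g_line]; exact h c
    · intro h
      refine ⟨?_, fun c => by rw [g_line]; exact h c⟩
      simp [Finset.sum_add_distrib, hKsum, Pi.add_apply, Pi.smul_apply, smul_eq_mul,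
        ← Finset.mul_sum, hsum]
  have hT0 : (0 : ℝ) ∈ T := by
    intro c; simpa using hKc c
  obtain ⟨x₀, hx₀⟩ := hneg
  have hbdd : BddAbove T := by
    refine ⟨δ x₀ / (-v x₀), fun s hs => ?_⟩
    have h := hs (Sum.inl x₀)
    simp only [g] at h
    rw [le_div_iff₀ (by linarith)]
    nlinarith
  have hclosed : IsClosed T := by
    have : T = ⋂ c, {s : ℝ | g d c δ + s * g d c v ≤ 0} := by
      ext s; simp [hT, Set.mem_iInter]
    rw [this]
    exact isClosed_iInter fun c =>
      isClosed_le (by continuity) continuous_const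
  set b := sSup T with hb
  have hbT : b ∈ T := hclosed.csSup_mem ⟨0, hT0⟩ hbdd
  have hb0 : 0 ≤ b := le_csSup hbdd hT0
  have hbK : δ + b • v ∈ Kd d := (hmem b).mpr hbT
  have hex : ∃ c, g d c δ ≠ 0 ∧ g d c (δ + b • v) = 0 := by
    by_contra h
    push_neg at h
    -- all constraints that are non-tight at δ are strict at b, so we can go a bit further
    set U : Set ℝ :=
      ⋂ c ∈ (Finset.univ.filter fun c => g d c δ ≠ 0),
        {s : ℝ | g d c δ + s * g d c v < 0} with hU
    have hUopen : IsOpen U :=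
      isOpen_biInter_finset fun c _ =>
        isOpen_lt (by continuity) continuous_const
    have hbU : b ∈ U := by
      rw [hU]
      simp only [Set.mem_iInter, Finset.mem_filter, Finset.mem_univ, true_and]
      intro c hc
      have h1 : g d c δ + b * g d c v ≤ 0 := hbT c
      have h2 : g d c (δ + b • v) ≠ 0 := h c hc
      rw [g_line] at h2
      exact lt_of_le_of_ne h1 h2
    obtain ⟨ε, hε, hball⟩ := Metric.isOpen_iff.mp hUopen b hbU
    have hmem2 : b + ε / 2 ∈ T := by
      intro c
      by_cases hc : g d c δ = 0
      · have := htight c hc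
        simp [hc, this]
      · have : b + ε / 2 ∈ U := by
          apply hball
          simp [Real.dist_eq, abs_of_nonneg, abs_of_pos]
          rw [abs_of_nonneg (by linarith)]
          linarith
        rw [hU] at this
        simp only [Set.mem_iInter, Finset.mem_filter, Finset.mem_univ, true_and] at this
        exact le_of_lt (this c hc)
    have := le_csSup hbdd hmem2
    rw [← hb] at this
    linarith
  obtain ⟨c₀, hc₀1, hc₀2⟩ := hex
  refine ⟨b, hb0, hbK, ?_⟩
  constructor
  · intro c hc
    simp only [Finset.mem_filter, Finset.mem_univ, true_and] at hc ⊢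
    intro h0
    apply hc
    rw [g_line, h0, htight c h0]
    ring
  · intro hsub
    have := hsub (by simp [hc₀1] : c₀ ∈ _)
    simp only [Finset.mem_filter, Finset.mem_univ, true_and] at this
    exact this hc₀2

/-- Minkowski–Carathéodory for the polytope `Kd`:
every point is in the convex hull of the extreme points. -/
lemma rep {d : X → X → ℝ} :
    ∀ (n : ℕ) (δ : X → ℝ), δ ∈ Kd d →
      (Finset.univ.filter fun c => g d c δ ≠ 0).card < n →
      δ ∈ convexHull ℝ ((Kd d).extremePoints ℝ) := by
  intro n
  induction n with
  | zero => intro δ _ h; omega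
  | succ n ih =>
    intro δ hδ hcard
    by_cases hext : δ ∈ (Kd d).extremePoints ℝ
    · exact subset_convexHull ℝ _ hext
    · rw [mem_extremePoints] at hext
      push_neg at hext
      obtain ⟨y, hy, z, hz, hseg, hne⟩ := hext hδ
      obtain ⟨t₁, t₂, ht₁, ht₂, ht12, heq⟩ := hseg
      set v : X → ℝ := z - y with hv
      have hvne : v ≠ 0 := by
        intro h0
        have hzy : z = y := by
          have := sub_eq_zero.mp h0
          exact this
        have hδy : y = δ := by
          rw [← heq, hzy, ← add_smul, ht12, one_smul]
        exact hne hδy (by rw [hzy]; exact hδy)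
      have hsumv : ∑ x, v x = 0 := by
        have h1 := hy.2.1
        have h2 := hz.2.1
        simp [hv, Pi.sub_apply, Finset.sum_sub_distrib, h1, h2]
      have htight : ∀ c, g d c δ = 0 → g d c v = 0 := by
        intro c h0
        have hgy := (mem_Kd_iff.mp hy).2 c
        have hgz := (mem_Kd_iff.mp hz).2 c
        have hcomb : t₁ * g d c y + t₂ * g d c z = 0 := by
          rw [← g_combo, heq, h0]
        have hgy0 : g d c y = 0 := by nlinarith
        have hgz0 : g d c z = 0 := by nlinarith
        rw [hv, g_sub, hgy0, hgz0, sub_zero]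
      have hneg : ∃ x, v x < 0 := by
        by_contra h
        push_neg at h
        have : ∀ x ∈ Finset.univ, v x = 0 :=
          (Finset.sum_eq_zero_iff_of_nonneg (fun x _ => h x)).mp hsumv
        refine hvne (funext fun x => ?_)
        rw [Pi.zero_apply]
        exact this x (Finset.mem_univ x)
      have hpos : ∃ x, 0 < v x := by
        by_contra h
        push_neg at h
        have : ∀ x ∈ Finset.univ, -v x = 0 := by
          apply (Finset.sum_eq_zero_iff_of_nonneg (fun x _ => by simpa using h x)).mp
          simp [hsumv]
        refine hvne (funext fun x => ?_)
        rw [Pi.zero_apply]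
        have := this x (Finset.mem_univ x)
        linarith
      obtain ⟨b, hb0, hbK, hbss⟩ := push hδ hsumv htight hneg
      have htight' : ∀ c, g d c δ = 0 → g d c (-v) = 0 := by
        intro c h0
        rw [g_neg, htight c h0, neg_zero]
      have hneg' : ∃ x, (-v) x < 0 := by
        obtain ⟨x, hx⟩ := hpos; exact ⟨x, by simpa using hx⟩
      have hsumv' : ∑ x, (-v) x = 0 := by simp [hsumv]
      obtain ⟨a, ha0, haK, hass⟩ := push hδ hsumv' htight' hneg'
      have hcard' : (Finset.univ.filter fun c => g d c δ ≠ 0).card ≤ n :=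
        Nat.lt_succ_iff.mp hcard
      have hp := ih _ haK (lt_of_lt_of_le (Finset.card_lt_card hass) hcard')
      have hq := ih _ hbK (lt_of_lt_of_le (Finset.card_lt_card hbss) hcard')
      have hab : 0 < a + b := by
        rcases lt_or_eq_of_le ha0 with h | h
        · linarith
        · rcases lt_or_eq_of_le hb0 with h' | h'
          · linarith
          · exfalso
            apply ssubset_irrefl _ (by rwa [← h', zero_smul, add_zero] at hbss)
      apply (convex_convexHull ℝ _).segment_subset hp hq
      refine ⟨b / (a + b), a / (a + b), div_nonneg hb0 hab.le, div_nonneg ha0 hab.le,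
        by rw [← add_div, add_comm, div_self hab.ne'], ?_⟩
      funext x
      simp only [Pi.add_apply, Pi.smul_apply, Pi.neg_apply, smul_eq_mul]
      field_simp
      ring

/-- Every element of `Kd` is a finite positive convex combination of extreme points. -/
lemma exists_combo {d : X → X → ℝ} {δ : X → ℝ} (hδ : δ ∈ Kd d) :
    ∃ (k : ℕ) (w : Fin k → ℝ) (e : Fin k → X → ℝ),
      (∀ i, 0 < w i) ∧ (∀ i, e i ∈ (Kd d).extremePoints ℝ) ∧
      ∀ x, ∑ i, w i * e i x = δ x := by
  have hrep := rep (d := d) ((Finset.univ.filter fun c => g d c δ ≠ 0).card + 1) δ hδ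
    (Nat.lt_succ_self _)
  rw [_root_.convexHull_eq] at hrep
  obtain ⟨ι, t, wt, zt, hw0, hw1, hzt, hcm⟩ := hrep
  set t' : Finset ι := t.filter (fun i => wt i ≠ 0) with ht'
  refine ⟨t'.card, fun i => wt (t'.equivFin.symm i), fun i => zt (t'.equivFin.symm i),
    ?_, ?_, ?_⟩
  · intro i
    have hmem : (↑(t'.equivFin.symm i) : ι) ∈ t.filter (fun i => wt i ≠ 0) :=
      (t'.equivFin.symm i).2
    rw [Finset.mem_filter] at hmem
    exact lt_of_le_of_ne (hw0 _ hmem.1) (Ne.symm hmem.2)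
  · intro i
    have hmem : (↑(t'.equivFin.symm i) : ι) ∈ t.filter (fun i => wt i ≠ 0) :=
      (t'.equivFin.symm i).2
    rw [Finset.mem_filter] at hmem
    exact hzt _ hmem.1
  · intro x
    have e1 : ∑ i : Fin t'.card, wt (t'.equivFin.symm i) * zt (t'.equivFin.symm i) x
        = ∑ j : t', wt j * zt (j : ι) x :=
      Equiv.sum_comp t'.equivFin.symm (fun j : t' => wt j * zt (j : ι) x)
    have e2 : ∑ j : t', wt j * zt (j : ι) x = ∑ j ∈ t', wt j * zt j x :=
      Finset.sum_coe_sort t' (fun j => wt j * zt j x)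
    have e3 : ∑ j ∈ t', wt j * zt j x = ∑ j ∈ t, wt j * zt j x := by
      rw [ht']
      exact Finset.sum_filter_of_ne (fun j _ h => by
        intro h0; apply h; rw [h0, zero_mul])
    have e4 : ∑ j ∈ t, wt j * zt j x = δ x := by
      have := hcm
      rw [Finset.centerMass_eq_of_sum_1 _ _ hw1] at this
      calc ∑ j ∈ t, wt j * zt j x = (∑ j ∈ t, wt j • zt j) x := by
            rw [Finset.sum_apply]; simp [smul_eq_mul]
        _ = δ x := by rw [this]
    rw [e1, e2, e3, e4]

end VertexAux

/-- Every `d`-private mechanism is a refinement of a vertex mechanism of the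
privacy type: a `d`-private channel whose normalized columns are extreme
points of `Kd`. -/
theorem refinement_of_vertex_mechanism
    {X Y : Type} [Fintype X] [Fintype Y] [Nonempty X] [Nonempty Y]
    (d : X → X → ℝ) (hd : IsMetric d)
    (M : X → Y → ℝ) (hM : IsChannel M) (hMp : IsPrivate d M) :
    ∃ (m : ℕ) (_ : 0 < m) (V : X → Fin m → ℝ) (P : Fin m → Y → ℝ),
      IsChannel V ∧ IsPrivate d V ∧
      (∀ z, 0 < ∑ x, V x z) ∧
      (∀ z, (fun x => V x z / ∑ x', V x' z) ∈ Set.extremePoints ℝ (Kd d)) ∧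
      IsChannel P ∧
      ∀ x y, M x y = ∑ z, V x z * P z y := by
  classical
  -- decompose each column of `M` into positive multiples of extreme points of `Kd`
  have key : ∀ y : Y, ∃ (k : ℕ) (w : Fin k → ℝ) (e : Fin k → X → ℝ),
      (∀ i, 0 < w i) ∧ (∀ i, e i ∈ (Kd d).extremePoints ℝ) ∧
      ∀ x, ∑ i, w i * e i x = M x y := by
    intro y
    set c : ℝ := ∑ x, M x y with hc
    have hc0 : 0 ≤ c := Finset.sum_nonneg fun x _ => hM.1 x y
    rcases eq_or_lt_of_le hc0 with h | h
    · refine ⟨0, Fin.elim0, Fin.elim0, fun i => i.elim0, fun i => i.elim0, fun x => ?_⟩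
      have hz : ∀ x ∈ Finset.univ, M x y = 0 :=
        (Finset.sum_eq_zero_iff_of_nonneg fun x _ => hM.1 x y).mp h.symm
      simp [hz x (Finset.mem_univ x)]
    · have hδ : (fun x => M x y / c) ∈ Kd d := by
        refine ⟨fun x => div_nonneg (hM.1 x y) hc0, ?_, fun x x' => ?_⟩
        · rw [← Finset.sum_div, ← hc, div_self (ne_of_gt h)]
        · simp only [div_eq_mul_inv]
          calc M x y * c⁻¹ ≤ (Real.exp (d x x') * M x' y) * c⁻¹ :=
                mul_le_mul_of_nonneg_right (hMp x x' y) (inv_nonneg.mpr hc0)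
            _ = Real.exp (d x x') * (M x' y * c⁻¹) := by ring
      obtain ⟨k, w, e, hw, he, hsum⟩ := VertexAux.exists_combo hδ
      refine ⟨k, fun i => c * w i, e, fun i => mul_pos h (hw i), he, fun x => ?_⟩
      have h1 : ∑ i, c * w i * e i x = c * ∑ i, w i * e i x := by
        rw [Finset.mul_sum]
        exact Finset.sum_congr rfl fun i _ => by ring
      rw [h1, hsum x, mul_comm, div_mul_cancel₀ _ (ne_of_gt h)]
  choose k w e hw he hsum using key
  have heKd : ∀ y i, e y i ∈ Kd d := fun y i => extremePoints_subset (he y i)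
  have hZne : Nonempty ((y : Y) × Fin (k y)) := by
    by_contra h
    have hk0 : ∀ y, k y = 0 := by
      intro y
      by_contra hk
      exact h ⟨⟨y, ⟨0, Nat.pos_of_ne_zero hk⟩⟩⟩
    obtain ⟨x⟩ := ‹Nonempty X›
    have h1 := hM.2 x
    have h2 : ∀ y, M x y = 0 := by
      intro y
      haveI : IsEmpty (Fin (k y)) := by rw [hk0 y]; infer_instance
      rw [← hsum y x, Finset.univ_eq_empty, Finset.sum_empty]
    rw [Finset.sum_congr rfl fun y _ => h2 y] at h1
    simp at h1
  haveI := hZne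
  set m : ℕ := Fintype.card ((y : Y) × Fin (k y)) with hmdef
  have hm : 0 < m := Fintype.card_pos
  set E : Fin m ≃ (y : Y) × Fin (k y) := (Fintype.equivFin _).symm with hE
  refine ⟨m, hm, fun x j => w (E j).1 (E j).2 * e (E j).1 (E j).2 x,
    fun j y => if y = (E j).1 then 1 else 0, ?_, ?_, ?_, ?_, ?_, ?_⟩
  · -- V is a channel
    refine ⟨fun x j => mul_nonneg (hw _ _).le ((heKd _ _).1 x), fun x => ?_⟩
    have h1 : ∑ j : Fin m, w (E j).1 (E j).2 * e (E j).1 (E j).2 x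
        = ∑ z : (y : Y) × Fin (k y), w z.1 z.2 * e z.1 z.2 x :=
      Equiv.sum_comp E (fun z : (y : Y) × Fin (k y) => w z.1 z.2 * e z.1 z.2 x)
    rw [h1, ← Finset.univ_sigma_univ, Finset.sum_sigma]
    rw [Finset.sum_congr rfl fun y' _ => hsum y' x]
    exact hM.2 x
  · -- V is private
    intro x x' j
    calc w (E j).1 (E j).2 * e (E j).1 (E j).2 x
        ≤ w (E j).1 (E j).2 * (Real.exp (d x x') * e (E j).1 (E j).2 x') :=
          mul_le_mul_of_nonneg_left ((heKd _ _).2.2 x x') (hw _ _).le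
      _ = Real.exp (d x x') * (w (E j).1 (E j).2 * e (E j).1 (E j).2 x') := by ring
  · -- columns have positive sum
    intro j
    have hcol : ∑ x, w (E j).1 (E j).2 * e (E j).1 (E j).2 x = w (E j).1 (E j).2 := by
      rw [← Finset.mul_sum, (heKd _ _).2.1, mul_one]
    rw [hcol]
    exact hw _ _
  · -- normalized columns are extreme points
    intro j
    have hcol : ∑ x', w (E j).1 (E j).2 * e (E j).1 (E j).2 x' = w (E j).1 (E j).2 := by
      rw [← Finset.mul_sum, (heKd _ _).2.1, mul_one]
    have heq : (fun x => w (E j).1 (E j).2 * e (E j).1 (E j).2 x /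
        ∑ x', w (E j).1 (E j).2 * e (E j).1 (E j).2 x') = e (E j).1 (E j).2 := by
      funext x
      rw [hcol]
      exact mul_div_cancel_left₀ _ (ne_of_gt (hw _ _))
    rw [heq]
    exact he _ _
  · -- P is a channel
    refine ⟨fun j y => by positivity, fun j => ?_⟩
    simp
  · -- factorization
    intro x y
    symm
    have h1 : ∑ j : Fin m, (w (E j).1 (E j).2 * e (E j).1 (E j).2 x) *
          (if y = (E j).1 then 1 else 0)
        = ∑ z : (y' : Y) × Fin (k y'), (w z.1 z.2 * e z.1 z.2 x) *
          (if y = z.1 then 1 else 0) :=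
      Equiv.sum_comp E (fun z : (y' : Y) × Fin (k y') =>
        (w z.1 z.2 * e z.1 z.2 x) * (if y = z.1 then 1 else 0))
    rw [h1, ← Finset.univ_sigma_univ, Finset.sum_sigma]
    have h2 : ∀ y' : Y, ∑ i, (w y' i * e y' i x) * (if y = y' then 1 else 0)
        = if y = y' then M x y' else 0 := by
      intro y'
      split_ifs with hyy
      · simp only [mul_one]
        exact hsum y' x
      · simp
    rw [Finset.sum_congr rfl fun y' _ => h2 y']
    simp [Finset.sum_ite_eq]
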